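/- Let Γ' be obtained from a weighted forest Γ by blowing up a vertex P, creating new vertex R, and suppose d(Γ') = d(Γ) = d. Then, in Γ', the vertex determinant d_R := d(Γ'_R) equals d_P + d, and the edge determinant d_{PR} := d(Γ'_{PR}) (where Γ'_{PR} is Γ' with only the edge (P,R) removed) also equals d_P + d, where d_P = d(Γ_P). -/

import Mathlib

open Classical Finset

/-- The matrix `Q(Γ)` of a weighted graph: `-a i` on the diagonal, `-1` for
adjacent vertices, `0` otherwise. -/
noncomputable def wMatrix {V : Type*} [Fintype V] (G : SimpleGraph V) (a : V → ℤ) :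
    Matrix V V ℤ :=
  Matrix.of fun i j => if i = j then -a i else if G.Adj i j then (-1 : ℤ) else 0

/-- The determinant `d(Γ)` of a weighted graph. -/
noncomputable def wDet {V : Type*} [Fintype V] (G : SimpleGraph V) (a : V → ℤ) : ℤ :=
  (wMatrix G a).det

/-- The determinant of the weighted graph obtained by deleting a set `s` of
vertices (and all incident edges). -/
noncomputable def wDetDel {V : Type*} [Fintype V] (G : SimpleGraph V) (a : V → ℤ)
    (s : Set V) : ℤ :=
  wDet (SimpleGraph.comap (Subtype.val : {v // v ∉ s} → V) G) (fun v => a v.1)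

/-- The blow-up of a weighted graph at a vertex `P`. -/
def blowupVertexGraph {V : Type*} (G : SimpleGraph V) (P : V) :
    SimpleGraph (V ⊕ Unit) where
  Adj x y :=
    match x, y with
    | Sum.inl u, Sum.inl v => G.Adj u v
    | Sum.inl u, Sum.inr _ => u = P
    | Sum.inr _, Sum.inl v => v = P
    | Sum.inr _, Sum.inr _ => False
  symm := by
    constructor
    rintro (u | u) (v | v) h
    · exact G.adj_symm h
    · exact h
    · exact h
    · exact h.elim
  loopless := by
    constructor
    rintro (u | u) h
    · exact G.irrefl h
    · exact h.elim

/-- The weights after blowing up the vertex `P`. -/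
noncomputable def blowupVertexWeights {V : Type*} [DecidableEq V] (a : V → ℤ) (P : V) :
    V ⊕ Unit → ℤ :=
  Sum.elim (Function.update a P (a P - 1)) (fun _ => (-1 : ℤ))

section Aux

variable {V : Type*} [Fintype V] [DecidableEq V]

/-- Determinants do not depend on the choice of instances. -/
lemma det_inst' {n : Type*} {d1 d2 : DecidableEq n} {i1 i2 : Fintype n} (M : Matrix n n ℤ) :
    @Matrix.det n d1 i1 ℤ _ M = @Matrix.det n d2 i2 ℤ _ M := by
  obtain rfl : i1 = i2 := Subsingleton.elim _ _
  obtain rfl : d1 = d2 := funext fun a => funext fun b => Subsingleton.elim _ _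
  rfl

/-- Equivalence between `{v // v ∉ {P}} ⊕ Unit` and `V`. -/
noncomputable def vertEquiv (P : V) : {v : V // v ∉ ({P} : Set V)} ⊕ Unit ≃ V where
  toFun := Sum.elim Subtype.val fun _ => P
  invFun v := if h : v = P then Sum.inr () else Sum.inl ⟨v, by simp [h]⟩
  left_inv := by
    rintro (⟨v, hv⟩ | ⟨⟩)
    · simp only [Set.mem_singleton_iff] at hv
      simp [hv]
    · simp
  right_inv v := by by_cases h : v = P <;> simp [h]

/-- Equivalence between `V` and the complement of the new vertex after blowup. -/
noncomputable def blowEquiv (P : V) :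
    V ≃ {v : V ⊕ Unit // v ∉ ({Sum.inr ()} : Set (V ⊕ Unit))} where
  toFun v := ⟨Sum.inl v, by simp⟩
  invFun w := Sum.elim id (fun _ => P) w.1
  left_inv v := rfl
  right_inv := by
    rintro ⟨(v | ⟨⟩), hw⟩
    · rfl
    · simp at hw

lemma wMatrix_update (G : SimpleGraph V) (a : V → ℤ) (P : V) :
    wMatrix G (Function.update a P (a P - 1)) =
      (wMatrix G a).updateRow P (wMatrix G a P + Pi.single P 1) := by
  classical
  ext i j
  by_cases hi : i = P
  · by_cases hj : j = P
    · simp [wMatrix, hi, hj, Function.update_apply, Matrix.updateRow_apply, Pi.single_apply]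
      ring
    · have hj' : ¬ P = j := fun h => hj h.symm
      simp [wMatrix, hi, hj, hj', Function.update_apply, Matrix.updateRow_apply,
        Pi.single_apply]
  · simp [wMatrix, hi, Function.update_apply, Matrix.updateRow_apply, Pi.single_apply]

lemma det_del_vertex (G : SimpleGraph V) (a : V → ℤ) (P : V) :
    wDetDel G a {P} = ((wMatrix G a).updateRow P (Pi.single P 1)).det := by
  classical
  have hdel : (wMatrix (SimpleGraph.comap (Subtype.val : {v // v ∉ ({P} : Set V)} → V) G)
      fun v => a v.1).det = ((wMatrix G a).updateRow P (Pi.single P 1)).det := by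
    rw [← Matrix.det_submatrix_equiv_self (vertEquiv P)
      ((wMatrix G a).updateRow P (Pi.single P 1))]
    have hsub : ((wMatrix G a).updateRow P (Pi.single P 1)).submatrix
        (vertEquiv P) (vertEquiv P) =
        Matrix.fromBlocks
          (wMatrix (SimpleGraph.comap (Subtype.val : {v // v ∉ ({P} : Set V)} → V) G)
            fun v => a v.1)
          (Matrix.of fun u (_ : Unit) => wMatrix G a u.1 P) 0 1 := by
      ext (u | u) (v | v)
      · have hu : u.1 ≠ P := by have := u.2; simpa using this
        simp [vertEquiv, Matrix.updateRow_ne hu, wMatrix, SimpleGraph.comap, Subtype.ext_iff]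
        congr 1
      · have hu : u.1 ≠ P := by have := u.2; simpa using this
        simp [vertEquiv, Matrix.updateRow_ne hu, wMatrix]
      · have hv : v.1 ≠ P := by have := v.2; simpa using this
        simp [vertEquiv, Pi.single_apply, hv, wMatrix]
      · simp [vertEquiv, Pi.single_apply, wMatrix, Matrix.one_apply]
    rw [hsub, Matrix.det_fromBlocks_zero₂₁, Matrix.det_one, mul_one]
  delta wDetDel wDet
  exact (det_inst' _).trans hdel

lemma det_update_weight (G : SimpleGraph V) (a : V → ℤ) (P : V) :
    wDet G (Function.update a P (a P - 1)) = wDetDel G a {P} + wDet G a := by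
  classical
  have hadd : (wMatrix G (Function.update a P (a P - 1))).det =
      (wMatrix G a).det + ((wMatrix G a).updateRow P (Pi.single P 1)).det := by
    rw [wMatrix_update, Matrix.det_updateRow_add, Matrix.updateRow_eq_self]
  have eL : wDet G (Function.update a P (a P - 1)) =
      (wMatrix G (Function.update a P (a P - 1))).det := by
    rw [wDet]; exact det_inst' _
  have eG : wDet G a = (wMatrix G a).det := by
    rw [wDet]; exact det_inst' _
  rw [eL, eG, det_del_vertex, hadd]
  ring

lemma det_del_inr (G : SimpleGraph V) (a : V → ℤ) (P : V) :
    wDetDel (blowupVertexGraph G P) (blowupVertexWeights a P) {Sum.inr ()} =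
      wDet G (Function.update a P (a P - 1)) := by
  classical
  have hmain : (wMatrix (SimpleGraph.comap
        (Subtype.val : {v : V ⊕ Unit // v ∉ ({Sum.inr ()} : Set (V ⊕ Unit))} → V ⊕ Unit)
        (blowupVertexGraph G P)) fun v => blowupVertexWeights a P v.1).det =
      (wMatrix G (Function.update a P (a P - 1))).det := by
    rw [← Matrix.det_submatrix_equiv_self (blowEquiv P)
      (wMatrix (SimpleGraph.comap
        (Subtype.val : {v : V ⊕ Unit // v ∉ ({Sum.inr ()} : Set (V ⊕ Unit))} → V ⊕ Unit)
        (blowupVertexGraph G P)) fun v => blowupVertexWeights a P v.1)]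
    congr 1
    ext u v
    have e : ∀ w, ((blowEquiv P w : {v : V ⊕ Unit // v ∉ ({Sum.inr ()} : Set (V ⊕ Unit))}) : V ⊕ Unit) = Sum.inl w := fun _ => rfl
    simp [e, wMatrix, SimpleGraph.comap, Subtype.ext_iff, blowupVertexGraph,
      blowupVertexWeights, Function.update_apply, -Sum.update_elim_inl]
  delta wDetDel wDet
  exact (det_inst' _).trans (hmain.trans (det_inst' _))

lemma det_del_edge (G : SimpleGraph V) (a : V → ℤ) (P : V) :
    wDet ((blowupVertexGraph G P).deleteEdges {s(Sum.inl P, Sum.inr ())})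
        (blowupVertexWeights a P) =
      wDet G (Function.update a P (a P - 1)) := by
  classical
  have hmat : wMatrix ((blowupVertexGraph G P).deleteEdges {s(Sum.inl P, Sum.inr ())})
      (blowupVertexWeights a P) =
      Matrix.fromBlocks (wMatrix G (Function.update a P (a P - 1))) 0 0 1 := by
    ext (u | u) (v | v)
    · simp [wMatrix, SimpleGraph.deleteEdges_adj, blowupVertexGraph, blowupVertexWeights,
        Sym2.eq_iff, -Sum.update_elim_inl]
    · by_cases hu : u = P <;>
        simp [wMatrix, SimpleGraph.deleteEdges_adj, blowupVertexGraph, blowupVertexWeights,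
          Sym2.eq_iff, hu, -Sum.update_elim_inl]
    · by_cases hv : v = P <;>
        simp [wMatrix, SimpleGraph.deleteEdges_adj, blowupVertexGraph, blowupVertexWeights,
          Sym2.eq_iff, hv, -Sum.update_elim_inl]
    · simp [wMatrix, SimpleGraph.deleteEdges_adj, blowupVertexGraph, blowupVertexWeights,
        Matrix.one_apply, -Sum.update_elim_inl]
  have hmain : (wMatrix ((blowupVertexGraph G P).deleteEdges {s(Sum.inl P, Sum.inr ())})
      (blowupVertexWeights a P)).det =
      (wMatrix G (Function.update a P (a P - 1))).det := by
    rw [hmat, Matrix.det_fromBlocks_zero₂₁, Matrix.det_one, mul_one]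
  rw [wDet, wDet]
  exact (det_inst' _).trans (hmain.trans (det_inst' _))

end Aux

/-- Lemma 5.7, Case 1: after blowing up a vertex `P` of a weighted forest `Γ`
(with `d(Γ') = d(Γ) = d`), the new vertex `R` satisfies `d_R = d_P + d` and the
new edge satisfies `d_{PR} = d_P + d`. -/
theorem forest_det_blowup_vertex_labels {V : Type*} [Fintype V] [DecidableEq V]
    (G : SimpleGraph V) (hG : G.IsAcyclic) (a : V → ℤ) (P : V)
    (hd : wDet (blowupVertexGraph G P) (blowupVertexWeights a P) = wDet G a) :
    wDetDel (blowupVertexGraph G P) (blowupVertexWeights a P) {Sum.inr ()} =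
        wDetDel G a {P} + wDet G a ∧
      wDet ((blowupVertexGraph G P).deleteEdges {s(Sum.inl P, Sum.inr ())})
          (blowupVertexWeights a P) =
        wDetDel G a {P} + wDet G a := by
  refine ⟨?_, ?_⟩
  · rw [det_del_inr, det_update_weight]
  · rw [det_del_edge, det_update_weight]
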